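/- arXiv:1202.2584 — 3 statements merged into one kernel-verified Lean document; each statement's English description precedes it below -/
import Mathlib

section
/- Let I be a finite subset of ℝ^d and ζ a point in the convex hull of I with a strictly positive convex representation ζ = Σ_{z∈I} β_z z (all β_z > 0, Σβ_z = 1). If ξ_n ∈ conv(I) is a sequence with ξ_n → ζ, then there exist coefficients α^n_z ≥ 0 with Σ_{z∈I} α^n_z = 1, ξ_n = Σ_{z∈I} α^n_z z, and α^n_z → β_z for every z ∈ I. -/
open Filter Topology

theorem stmt0 (d : ℕ) (I : Finset (Fin d → ℝ)) (β : (Fin d → ℝ) → ℝ)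
    (hβpos : ∀ z ∈ I, 0 < β z) (hβsum : ∑ z ∈ I, β z = 1)
    (ζ : Fin d → ℝ) (hζ : ζ = ∑ z ∈ I, β z • z)
    (ξ : ℕ → (Fin d → ℝ)) (hξ : ∀ n, ξ n ∈ convexHull ℝ (I : Set (Fin d → ℝ)))
    (hlim : Tendsto ξ atTop (𝓝 ζ)) :
    ∃ α : ℕ → (Fin d → ℝ) → ℝ,
      (∀ n, ∀ z ∈ I, 0 ≤ α n z) ∧
      (∀ n, ∑ z ∈ I, α n z = 1) ∧
      (∀ n, ξ n = ∑ z ∈ I, α n z • z) ∧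
      (∀ z ∈ I, Tendsto (fun n => α n z) atTop (𝓝 (β z))) := by
  classical
  have hIne : I.Nonempty := by
    rcases I.eq_empty_or_nonempty with h | h
    · subst h; simp at hβsum
    · exact h
  obtain ⟨z₀, hz₀⟩ := hIne
  -- the linear map sending coefficients to the combination of z - z₀
  let F : ({x // x ∈ I} → ℝ) →ₗ[ℝ] (Fin d → ℝ) :=
    { toFun := fun c => ∑ z : {x // x ∈ I}, c z • ((z : Fin d → ℝ) - z₀)
      map_add' := by intro a b; simp [add_smul, Finset.sum_add_distrib]
      map_smul' := by intro r a; simp [smul_smul, Finset.smul_sum]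
      }
  set V := LinearMap.range F with hV
  -- any convex combination minus z₀ lies in V
  have hrep : ∀ w : (Fin d → ℝ) → ℝ, (∑ z ∈ I, w z = 1) →
      (∑ z ∈ I, w z • z) - z₀ ∈ V := by
    intro w hw
    refine ⟨fun z => w z, ?_⟩
    show ∑ z : {x // x ∈ I}, w z • ((z : Fin d → ℝ) - z₀) = _
    rw [Finset.sum_coe_sort I (fun z => w z • (z - z₀))]
    simp only [smul_sub]
    rw [Finset.sum_sub_distrib, ← Finset.sum_smul, hw, one_smul]
  -- convex representations of each ξ n
  have hreps : ∀ n, ∃ w : (Fin d → ℝ) → ℝ, (∀ z ∈ I, 0 ≤ w z) ∧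
      ∑ z ∈ I, w z = 1 ∧ ∑ z ∈ I, w z • z = ξ n := fun n =>
    Finset.mem_convexHull'.1 (hξ n)
  choose γ hγ0 hγ1 hγrep using hreps
  have hv : ∀ n, ξ n - ζ ∈ V := by
    intro n
    have h1 : ξ n - z₀ ∈ V := by rw [← hγrep n]; exact hrep _ (hγ1 n)
    have h2 : ζ - z₀ ∈ V := by rw [hζ]; exact hrep _ hβsum
    have := sub_mem h1 h2
    simpa using this
  -- right inverse of F onto its range
  obtain ⟨g, hg⟩ := F.rangeRestrict.exists_rightInverse_of_surjective
    (LinearMap.range_eq_top.2 F.surjective_rangeRestrict)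
  have hginv : ∀ v : V, F (g v) = (v : Fin d → ℝ) := by
    intro v
    have := congrArg (fun h => (h v : Fin d → ℝ)) hg
    simpa [LinearMap.rangeRestrict] using this
  set v : ℕ → V := fun n => ⟨ξ n - ζ, hv n⟩ with hvdef
  set c : ℕ → {x // x ∈ I} → ℝ := fun n => g (v n) with hcdef
  set lam : ℕ → (Fin d → ℝ) → ℝ := fun n z =>
    (if h : z ∈ I then c n ⟨z, h⟩ else 0) - (if z = z₀ then ∑ w : {x // x ∈ I}, c n w else 0)
    with hlamdef
  -- algebraic identities
  have hsum_dite : ∀ n, ∑ z ∈ I, (if h : z ∈ I then c n ⟨z, h⟩ else 0) =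
      ∑ w : {x // x ∈ I}, c n w := by
    intro n
    rw [← Finset.sum_coe_sort I (fun z => if h : z ∈ I then c n ⟨z, h⟩ else 0)]
    exact Finset.sum_congr rfl fun x _ => by rw [dif_pos x.2]
  have hlam_sum : ∀ n, ∑ z ∈ I, lam n z = 0 := by
    intro n
    simp only [hlamdef]
    rw [Finset.sum_sub_distrib, hsum_dite, Finset.sum_ite_eq' I z₀, if_pos hz₀, sub_self]
  have hlam_comb : ∀ n, ∑ z ∈ I, lam n z • z = ξ n - ζ := by
    intro n
    simp only [hlamdef, sub_smul]
    rw [Finset.sum_sub_distrib]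
    have h1 : ∑ z ∈ I, (if h : z ∈ I then c n ⟨z, h⟩ else 0) • z
        = ∑ w : {x // x ∈ I}, c n w • (w : Fin d → ℝ) := by
      rw [← Finset.sum_coe_sort I (fun z => (if h : z ∈ I then c n ⟨z, h⟩ else 0) • z)]
      exact Finset.sum_congr rfl fun x _ => by rw [dif_pos x.2]
    have h2 : ∑ z ∈ I, (if z = z₀ then ∑ w : {x // x ∈ I}, c n w else 0) • z
        = (∑ w : {x // x ∈ I}, c n w) • z₀ := by
      calc ∑ z ∈ I, (if z = z₀ then ∑ w : {x // x ∈ I}, c n w else 0) • z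
          = ∑ z ∈ I, (if z = z₀ then (∑ w : {x // x ∈ I}, c n w) • z₀ else 0) :=
            Finset.sum_congr rfl fun x _ => by split_ifs with h <;> simp [h]
        _ = (∑ w : {x // x ∈ I}, c n w) • z₀ := by
            rw [Finset.sum_ite_eq' I z₀ (fun _ => (∑ w : {x // x ∈ I}, c n w) • z₀), if_pos hz₀]
    rw [h1, h2]
    have := hginv (v n)
    have hF : ∑ w : {x // x ∈ I}, c n w • ((w : Fin d → ℝ) - z₀) = ξ n - ζ := this
    rw [← hF]
    simp [smul_sub, Finset.sum_sub_distrib, ← Finset.sum_smul]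
  -- convergence
  have hv0 : Tendsto v atTop (𝓝 0) := by
    rw [tendsto_subtype_rng]
    have : Tendsto (fun n => ξ n - ζ) atTop (𝓝 (ζ - ζ)) := hlim.sub tendsto_const_nhds
    simpa using this
  have hgc : Continuous g := g.continuous_of_finiteDimensional
  have hc0 : Tendsto c atTop (𝓝 0) := by
    have := (hgc.tendsto 0).comp hv0
    simpa [hcdef, Function.comp_def] using this
  have hlam0 : ∀ z ∈ I, Tendsto (fun n => lam n z) atTop (𝓝 0) := by
    intro z hz
    have h1 : Tendsto (fun n => c n ⟨z, hz⟩) atTop (𝓝 0) := by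
      have := (tendsto_pi_nhds.1 hc0) ⟨z, hz⟩
      simpa using this
    have h2 : Tendsto (fun n => ∑ w : {x // x ∈ I}, c n w) atTop (𝓝 0) := by
      have : Tendsto (fun n => ∑ w : {x // x ∈ I}, c n w) atTop
          (𝓝 (∑ w : {x // x ∈ I}, (0 : ℝ))) := by
        refine tendsto_finset_sum _ fun w _ => ?_
        have := (tendsto_pi_nhds.1 hc0) w
        simpa using this
      simpa using this
    have key : Tendsto (fun n => c n ⟨z, hz⟩
        - (if z = z₀ then ∑ w : {x // x ∈ I}, c n w else 0)) atTop (𝓝 0) := by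
      by_cases h : z = z₀
      · simp only [if_pos h]; simpa using h1.sub h2
      · simp only [if_neg h]; simpa using h1
    have : (fun n => lam n z) = (fun n => c n ⟨z, hz⟩
        - (if z = z₀ then ∑ w : {x // x ∈ I}, c n w else 0)) := by
      funext n; simp [hlamdef, dif_pos hz]
    rw [this]; exact key
  have hev : ∀ᶠ n in atTop, ∀ z ∈ I, 0 ≤ β z + lam n z := by
    rw [eventually_all_finset]
    intro z hz
    have : Tendsto (fun n => β z + lam n z) atTop (𝓝 (β z + 0)) :=
      tendsto_const_nhds.add (hlam0 z hz)
    rw [add_zero] at this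
    exact (this.eventually (eventually_gt_nhds (hβpos z hz))).mono fun n h => h.le
  obtain ⟨N, hN⟩ := eventually_atTop.1 hev
  refine ⟨fun n z => if N ≤ n then β z + lam n z else γ n z, ?_, ?_, ?_, ?_⟩
  · intro n z hz
    dsimp only
    split_ifs with h
    · exact hN n h z hz
    · exact hγ0 n z hz
  · intro n
    dsimp only
    split_ifs with h
    · rw [Finset.sum_add_distrib, hβsum, hlam_sum, add_zero]
    · exact hγ1 n
  · intro n
    dsimp only
    split_ifs with h
    · simp only [add_smul]
      rw [Finset.sum_add_distrib, hlam_comb, ← hζ]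
      abel
    · exact (hγrep n).symm
  · intro z hz
    have heq : ∀ᶠ n in atTop, β z + lam n z = (if N ≤ n then β z + lam n z else γ n z) := by
      filter_upwards [eventually_ge_atTop N] with n hn
      rw [if_pos hn]
    have : Tendsto (fun n => β z + lam n z) atTop (𝓝 (β z + 0)) :=
      tendsto_const_nhds.add (hlam0 z hz)
    rw [add_zero] at this
    exact this.congr' heq
end

section
/- Let I be a finite subset of ℚ^d and ζ ∈ conv(I) with a strictly positive convex representation ζ = Σ_{z∈I} β_z z. If ξ_n ∈ conv(I) ∩ ℚ^d converges to ζ, then there exist RATIONAL coefficients α^n_z ≥ 0 with Σ_{z∈I} α^n_z = 1, ξ_n = Σ_{z∈I} α^n_z z, and α^n_z → β_z for every z ∈ I. -/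
open Filter Topology Module Submodule Set

section Helpers

variable {κ : Type*} [Fintype κ]

lemma rat_dual {p : Submodule ℚ (κ → ℚ)} {b : κ → ℚ} (hb : b ∉ p) :
    ∃ u : κ → ℚ, (∀ x ∈ p, ∑ j, u j * x j = 0) ∧ ∑ j, u j * b j = 1 := by
  classical
  obtain ⟨f, hfb, hfp⟩ := p.exists_dual_map_eq_bot_of_notMem hb inferInstance
  have key : ∀ x : κ → ℚ, f x = ∑ j, x j * f (fun j' => if j = j' then 1 else 0) := by
    intro x
    conv_lhs => rw [pi_eq_sum_univ x]
    rw [map_sum]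
    simp [smul_eq_mul]
  refine ⟨fun j => (f b)⁻¹ * f (fun j' => if j = j' then 1 else 0), ?_, ?_⟩
  · intro x hx
    have hfx : f x = 0 := by
      have : f x ∈ p.map f := Submodule.mem_map_of_mem hx
      rwa [hfp, Submodule.mem_bot] at this
    calc ∑ j, (f b)⁻¹ * f (fun j' => if j = j' then 1 else 0) * x j
        = (f b)⁻¹ * ∑ j, x j * f (fun j' => if j = j' then 1 else 0) := by
          rw [Finset.mul_sum]; apply Finset.sum_congr rfl; intros; ring
      _ = 0 := by rw [← key, hfx, mul_zero]
  · calc ∑ j, (f b)⁻¹ * f (fun j' => if j = j' then 1 else 0) * b j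
        = (f b)⁻¹ * ∑ j, b j * f (fun j' => if j = j' then 1 else 0) := by
          rw [Finset.mul_sum]; apply Finset.sum_congr rfl; intros; ring
      _ = 1 := by rw [← key]; exact inv_mul_cancel₀ hfb

lemma mem_span_of_real_combo {ι : Type*} [Fintype ι] (v : ι → κ → ℚ) (b : κ → ℚ) (c : ι → ℝ)
    (h : ∀ j, ∑ i, c i * (v i j : ℝ) = (b j : ℝ)) : b ∈ span ℚ (Set.range v) := by
  by_contra hb
  obtain ⟨u, hu0, hu1⟩ := rat_dual hb
  have key : ∀ i, ∑ j, (u j : ℝ) * (v i j : ℝ) = 0 := by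
    intro i
    have := hu0 (v i) (subset_span (mem_range_self i))
    exact_mod_cast congrArg (fun q : ℚ => (q : ℝ)) this
  have h1 : (1 : ℝ) = ∑ j, (u j : ℝ) * (b j : ℝ) := by exact_mod_cast hu1.symm
  have h0 : ∑ j, (u j : ℝ) * (b j : ℝ) = 0 := by
    calc ∑ j, (u j : ℝ) * (b j : ℝ)
        = ∑ j, ∑ i, (u j : ℝ) * (c i * (v i j : ℝ)) := by
          apply Finset.sum_congr rfl; intro j _; rw [← Finset.mul_sum, h j]
      _ = ∑ i, c i * ∑ j, (u j : ℝ) * (v i j : ℝ) := by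
          rw [Finset.sum_comm]
          apply Finset.sum_congr rfl; intro i _
          rw [Finset.mul_sum]; apply Finset.sum_congr rfl; intros; ring
      _ = 0 := by simp [key]
  rw [← h1] at h0; exact one_ne_zero h0

lemma linearIndependent_cast {ι : Type*} [Fintype ι] (v : ι → κ → ℚ)
    (hv : LinearIndependent ℚ v) :
    LinearIndependent ℝ (fun i => fun j => ((v i j : ℝ))) := by
  classical
  rw [Fintype.linearIndependent_iff]
  intro c hc i0
  have h1 : v i0 ∉ span ℚ (v '' {i0}ᶜ) := hv.notMem_span_image (by simp)
  obtain ⟨u, hu0, hu1⟩ := rat_dual h1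
  have key : ∀ i, i ≠ i0 → ∑ j, (u j : ℝ) * (v i j : ℝ) = 0 := by
    intro i hi
    have := hu0 (v i) (subset_span ⟨i, by simpa using hi, rfl⟩)
    exact_mod_cast congrArg (fun q : ℚ => (q : ℝ)) this
  have key0 : ∑ j, (u j : ℝ) * (v i0 j : ℝ) = 1 := by
    exact_mod_cast congrArg (fun q : ℚ => (q : ℝ)) hu1
  have hcj : ∀ j, ∑ i, c i * (v i j : ℝ) = 0 := by
    intro j
    have := congrFun hc j
    simpa [Finset.sum_apply] using this
  have : ∑ i, c i * ∑ j, (u j : ℝ) * (v i j : ℝ) = 0 := by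
    calc ∑ i, c i * ∑ j, (u j : ℝ) * (v i j : ℝ)
        = ∑ i, ∑ j, (u j : ℝ) * (c i * (v i j : ℝ)) := by
          apply Finset.sum_congr rfl; intro i _
          rw [Finset.mul_sum]; apply Finset.sum_congr rfl; intros; ring
      _ = ∑ j, (u j : ℝ) * ∑ i, c i * (v i j : ℝ) := by
          rw [Finset.sum_comm]
          apply Finset.sum_congr rfl; intro j _; rw [Finset.mul_sum]
      _ = 0 := by simp [hcj]
  rw [Finset.sum_eq_single i0 (fun i _ hi => by rw [key i hi, mul_zero]) (by simp)] at this
  rwa [key0, mul_one] at this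

lemma cast_mem_span {κ ι' : Type*} (w : ι' → κ → ℚ) {x : κ → ℚ}
    (hx : x ∈ span ℚ (Set.range w)) :
    (fun j => ((x j : ℝ))) ∈ span ℝ (Set.range (fun i => fun j => ((w i j : ℝ)))) := by
  induction hx using Submodule.span_induction with
  | mem y hy =>
      obtain ⟨i, rfl⟩ := hy
      exact subset_span ⟨i, rfl⟩
  | zero => convert Submodule.zero_mem (span ℝ (Set.range (fun i => fun j => ((w i j : ℝ))))) using 1; funext j; simp
  | add y z _ _ hy hz =>
      have : (fun j => (((y + z) j : ℚ) : ℝ)) = (fun j => ((y j : ℝ))) + fun j => ((z j : ℝ)) := by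
        funext j; simp [Pi.add_apply]
      rw [this]; exact add_mem hy hz
  | smul q y _ hy =>
      have : (fun j => (((q • y) j : ℚ) : ℝ)) = (q : ℝ) • fun j => ((y j : ℝ)) := by
        funext j; simp [Pi.smul_apply, smul_eq_mul]
      rw [this]; exact smul_mem _ _ hy

lemma kernel_approx {ι κ : Type*} [Fintype ι] [Fintype κ] (v : ι → κ → ℚ) (c : ι → ℝ)
    (hc : ∀ j, ∑ i, c i * (v i j : ℝ) = 0) {ε : ℝ} (hε : 0 < ε) :
    ∃ y : ι → ℚ, (∀ j, ∑ i, y i * v i j = 0) ∧ ∀ i, |c i - (y i : ℝ)| < ε := by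
  classical
  set vR : ι → κ → ℝ := fun i j => (v i j : ℝ) with hvR
  set Tq : (ι → ℚ) →ₗ[ℚ] (κ → ℚ) := Fintype.linearCombination ℚ v with hTq
  set Tr : (ι → ℝ) →ₗ[ℝ] (κ → ℝ) := Fintype.linearCombination ℝ vR with hTr
  -- pointwise descriptions
  have hTq_apply : ∀ (f : ι → ℚ) (j : κ), Tq f j = ∑ i, f i * v i j := by
    intro f j
    rw [hTq, Fintype.linearCombination_apply]
    simp [Finset.sum_apply, smul_eq_mul]
  have hTr_apply : ∀ (f : ι → ℝ) (j : κ), Tr f j = ∑ i, f i * vR i j := by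
    intro f j
    rw [hTr, Fintype.linearCombination_apply]
    simp [Finset.sum_apply, smul_eq_mul]
  -- rank equality
  set p : Submodule ℚ (κ → ℚ) := span ℚ (Set.range v) with hp
  set r := finrank ℚ p with hr
  let rB : Basis (Fin r) ℚ p := finBasis ℚ p
  set w : Fin r → κ → ℚ := fun t => (rB t : κ → ℚ) with hw
  have hw_indep : LinearIndependent ℚ w :=
    rB.linearIndependent.map' p.subtype (Submodule.ker_subtype p)
  have hw_span : span ℚ (Set.range w) = p := by
    calc span ℚ (Set.range w) = Submodule.map p.subtype (span ℚ (Set.range rB)) := by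
          rw [Submodule.map_span]; congr 1; rw [← Set.range_comp]; rfl
      _ = Submodule.map p.subtype ⊤ := by rw [rB.span_eq]
      _ = p := Submodule.map_subtype_top p
  set wR : Fin r → κ → ℝ := fun t j => ((w t j : ℝ)) with hwR
  have hwR_indep : LinearIndependent ℝ wR := linearIndependent_cast w hw_indep
  have hspan_eq : span ℝ (Set.range wR) = span ℝ (Set.range vR) := by
    apply le_antisymm
    · rw [span_le]
      rintro _ ⟨t, rfl⟩
      have hwt : w t ∈ span ℚ (Set.range w) := subset_span (Set.mem_range_self t)
      rw [hw_span, hp] at hwt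
      exact cast_mem_span v hwt
    · rw [span_le]
      rintro _ ⟨i, rfl⟩
      have hvi : v i ∈ span ℚ (Set.range w) := by
        rw [hw_span, hp]; exact subset_span (Set.mem_range_self i)
      exact cast_mem_span w hvi
  have hrankR : finrank ℝ (span ℝ (Set.range vR)) = r := by
    rw [← hspan_eq, finrank_span_eq_card hwR_indep, Fintype.card_fin]
  -- kernels
  set Kq : Submodule ℚ (ι → ℚ) := LinearMap.ker Tq with hKq
  set s := finrank ℚ Kq with hs
  let eB : Basis (Fin s) ℚ Kq := finBasis ℚ Kq
  set e : Fin s → ι → ℚ := fun t => (eB t : ι → ℚ) with he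
  have he_indep : LinearIndependent ℚ e :=
    eB.linearIndependent.map' Kq.subtype (Submodule.ker_subtype Kq)
  set eR : Fin s → ι → ℝ := fun t i => ((e t i : ℝ)) with heR
  have heR_indep : LinearIndependent ℝ eR := linearIndependent_cast e he_indep
  have he_ker : ∀ t j, ∑ i, e t i * v i j = 0 := by
    intro t j
    have : Tq (e t) = 0 := (eB t).2
    have := congrFun this j
    rwa [hTq_apply] at this
  have heR_ker : ∀ t, eR t ∈ LinearMap.ker Tr := by
    intro t
    rw [LinearMap.mem_ker]
    funext j
    rw [hTr_apply]
    have := he_ker t j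
    have : ((∑ i, e t i * v i j : ℚ) : ℝ) = 0 := by rw [this]; norm_num
    push_cast at this
    simpa [eR, vR] using this
  have hle : span ℝ (Set.range eR) ≤ LinearMap.ker Tr := by
    rw [span_le]; rintro _ ⟨t, rfl⟩; exact heR_ker t
  -- dimension count
  have hdimKr : finrank ℝ (LinearMap.ker Tr) = s := by
    have h1 := LinearMap.finrank_range_add_finrank_ker Tr
    have h2 := LinearMap.finrank_range_add_finrank_ker Tq
    have hrTr : LinearMap.range Tr = span ℝ (Set.range vR) := by
      rw [hTr, Fintype.range_linearCombination]
    have hrTq : LinearMap.range Tq = span ℚ (Set.range v) := by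
      rw [hTq, Fintype.range_linearCombination]
    rw [hrTr, hrankR, Module.finrank_pi] at h1
    rw [hrTq, ← hp, ← hr, ← hKq, ← hs, Module.finrank_pi] at h2
    omega
  have hker_eq : span ℝ (Set.range eR) = LinearMap.ker Tr := by
    apply Submodule.eq_of_le_of_finrank_le hle
    rw [hdimKr, finrank_span_eq_card heR_indep, Fintype.card_fin]
  -- c is in the kernel
  have hcker : c ∈ LinearMap.ker Tr := by
    rw [LinearMap.mem_ker]; funext j; rw [hTr_apply]; exact hc j
  rw [← hker_eq] at hcker
  obtain ⟨a, ha⟩ := (mem_span_range_iff_exists_fun ℝ).1 hcker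
  -- approximate coefficients
  set B : ℝ := 1 + ∑ t, ∑ i, |((e t i : ℝ))| with hB
  have hB1 : (1 : ℝ) ≤ B := by
    have : (0:ℝ) ≤ ∑ t, ∑ i, |((e t i : ℝ))| :=
      Finset.sum_nonneg fun t _ => Finset.sum_nonneg fun i _ => abs_nonneg _
    linarith
  have hBpos : (0 : ℝ) < B := lt_of_lt_of_le one_pos hB1
  have hεB : 0 < ε / B := div_pos hε hBpos
  have hqa : ∀ t : Fin s, ∃ q : ℚ, |a t - (q : ℝ)| < ε / B := fun t => exists_rat_near (a t) hεB
  choose qa hqa using hqa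
  refine ⟨fun i => ∑ t, qa t * e t i, ?_, ?_⟩
  · intro j
    calc ∑ i, (∑ t, qa t * e t i) * v i j
        = ∑ i, ∑ t, qa t * (e t i * v i j) := by
          apply Finset.sum_congr rfl; intro i _
          rw [Finset.sum_mul]; apply Finset.sum_congr rfl; intros; ring
      _ = ∑ t, ∑ i, qa t * (e t i * v i j) := Finset.sum_comm
      _ = ∑ t, qa t * ∑ i, e t i * v i j := by
          apply Finset.sum_congr rfl; intro t _; rw [Finset.mul_sum]
      _ = 0 := by simp [he_ker]
  · intro i
    have hci : c i = ∑ t, a t * eR t i := by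
      rw [← ha]; simp [Finset.sum_apply, smul_eq_mul]
    have hyi : ((∑ t, qa t * e t i : ℚ) : ℝ) = ∑ t, (qa t : ℝ) * eR t i := by
      push_cast; rfl
    rw [hci, hyi, ← Finset.sum_sub_distrib]
    have step1 : ∀ t, |a t * eR t i - (qa t : ℝ) * eR t i| ≤ (ε / B) * |eR t i| := by
      intro t
      rw [← sub_mul, abs_mul]
      exact mul_le_mul_of_nonneg_right (le_of_lt (hqa t)) (abs_nonneg _)
    calc |∑ t, (a t * eR t i - (qa t : ℝ) * eR t i)|
        ≤ ∑ t, |a t * eR t i - (qa t : ℝ) * eR t i| := Finset.abs_sum_le_sum_abs _ _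
      _ ≤ ∑ t, (ε / B) * |eR t i| := Finset.sum_le_sum fun t _ => step1 t
      _ = (ε / B) * ∑ t, |eR t i| := by rw [Finset.mul_sum]
      _ ≤ (ε / B) * (B - 1) := by
          apply mul_le_mul_of_nonneg_left _ (le_of_lt hεB)
          have : ∀ t : Fin s, |eR t i| ≤ ∑ i', |eR t i'| := fun t =>
            Finset.single_le_sum (f := fun i' => |eR t i'|) (fun i' _ => abs_nonneg _)
              (Finset.mem_univ i)
          calc ∑ t, |eR t i| ≤ ∑ t, ∑ i', |eR t i'| := Finset.sum_le_sum fun t _ => this t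
            _ = B - 1 := by rw [hB]; ring
      _ < (ε / B) * B := by
          apply mul_lt_mul_of_pos_left _ hεB
          linarith
      _ = ε := div_mul_cancel₀ ε (ne_of_gt hBpos)

lemma rat_rep {d : ℕ} (I : Finset (Fin d → ℝ)) (v : (Fin d → ℝ) → Fin (d+1) → ℚ)
    (hv0 : ∀ z ∈ I, v z 0 = 1) (hvs : ∀ z ∈ I, ∀ i, ((v z i.succ : ℝ)) = z i)
    (x : Fin d → ℝ) (hx : x ∈ convexHull ℝ (I : Set (Fin d → ℝ)))
    (b : Fin (d+1) → ℚ) (hb0 : b 0 = 1) (hbs : ∀ i, ((b i.succ : ℝ)) = x i) :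
    ∃ r : (Fin d → ℝ) → ℚ, (∀ z ∈ I, 0 ≤ r z) ∧
      (∀ j, ∑ z ∈ I, r z * v z j = b j) := by
  classical
  rw [convexHull_eq_union] at hx
  simp only [Set.mem_iUnion] at hx
  obtain ⟨t, ht, haff, hxt⟩ := hx
  have hts : t ⊆ I := fun a ha => Finset.mem_coe.1 (ht (Finset.mem_coe.2 ha))
  obtain ⟨w, hw0, hw1, hwx⟩ := Finset.mem_convexHull'.1 hxt
  have hmemI : ∀ z : {z // z ∈ t}, (z : Fin d → ℝ) ∈ I := fun z => hts z.2
  -- real combination giving b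
  have hcombo : ∀ j, ∑ z : {z // z ∈ t}, w z.1 * ((v z.1 j : ℝ)) = (b j : ℝ) := by
    intro j
    induction j using Fin.cases with
    | zero =>
        have : ∀ z : {z // z ∈ t}, ((v z.1 0 : ℚ) : ℝ) = 1 := fun z => by
          rw [hv0 z.1 (hmemI z)]; norm_num
        simp only [this, mul_one]
        rw [Finset.sum_coe_sort t w, hw1, hb0]
        norm_num
    | succ i =>
        have : ∀ z : {z // z ∈ t}, ((v z.1 i.succ : ℚ) : ℝ) = z.1 i := fun z =>
          hvs z.1 (hmemI z) i
        simp only [this]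
        rw [hbs i, Finset.sum_coe_sort t (fun z => w z * z i), ← hwx]
        simp [Finset.sum_apply]
  have hbspan := mem_span_of_real_combo (fun z : {z // z ∈ t} => v z.1) b
    (fun z => w z.1) hcombo
  obtain ⟨y, hy⟩ := (mem_span_range_iff_exists_fun ℚ).1 hbspan
  have hyj : ∀ j, ∑ z : {z // z ∈ t}, y z * v z.1 j = b j := by
    intro j
    have := congrFun hy j
    simpa [Finset.sum_apply, smul_eq_mul] using this
  -- uniqueness via affine independence
  have hsum1 : ∑ z : {z // z ∈ t}, ((y z : ℝ)) = ∑ z : {z // z ∈ t}, w z.1 := by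
    have h0 := hyj 0
    have : ((∑ z : {z // z ∈ t}, y z * v z.1 0 : ℚ) : ℝ) = ((b 0 : ℚ) : ℝ) := by rw [h0]
    push_cast at this
    have h1 : ∀ z : {z // z ∈ t}, ((y z : ℝ)) * ((v z.1 0 : ℚ) : ℝ) = ((y z : ℝ)) := fun z => by
      rw [hv0 z.1 (hmemI z)]; norm_num
    rw [Finset.sum_congr rfl (fun z _ => h1 z)] at this
    rw [this, hb0]
    rw [Finset.sum_coe_sort t w, hw1]
    norm_num
  have hvec : ∑ z : {z // z ∈ t}, ((y z : ℝ)) • (z : Fin d → ℝ) =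
      ∑ z : {z // z ∈ t}, w z.1 • (z : Fin d → ℝ) := by
    have h2 : ∑ z : {z // z ∈ t}, w z.1 • (z : Fin d → ℝ) = x := by
      rw [Finset.sum_coe_sort t (fun z => w z • z), hwx]
    rw [h2]
    funext i
    rw [Finset.sum_apply]
    have h3 := hyj i.succ
    have : ((∑ z : {z // z ∈ t}, y z * v z.1 i.succ : ℚ) : ℝ) = ((b i.succ : ℚ) : ℝ) := by
      rw [h3]
    push_cast at this
    rw [hbs i] at this
    rw [← this]
    apply Finset.sum_congr rfl
    intro z _
    rw [Pi.smul_apply, smul_eq_mul, hvs z.1 (hmemI z) i]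
  have heq : ∀ z : {z // z ∈ t}, ((y z : ℝ)) = w z.1 := fun z =>
    haff.eq_of_sum_eq_sum hsum1 hvec z (Finset.mem_univ z)
  have hynn : ∀ z : {z // z ∈ t}, 0 ≤ y z := by
    intro z
    have := hw0 z.1 z.2
    rw [← heq z] at this
    exact_mod_cast this
  refine ⟨fun z => if h : z ∈ t then y ⟨z, h⟩ else 0, ?_, ?_⟩
  · intro z _
    by_cases h : z ∈ t
    · simp only [dif_pos h]; exact hynn ⟨z, h⟩
    · simp [dif_neg h]
  · intro j
    calc ∑ z ∈ I, (if h : z ∈ t then y ⟨z, h⟩ else 0) * v z j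
        = ∑ z ∈ t, (if h : z ∈ t then y ⟨z, h⟩ else 0) * v z j := by
          refine (Finset.sum_subset hts ?_).symm
          intro z _ hz
          rw [dif_neg hz, zero_mul]
      _ = ∑ z : {z // z ∈ t}, (if h : z.1 ∈ t then y ⟨z.1, h⟩ else 0) * v z.1 j :=
          (Finset.sum_coe_sort t _).symm
      _ = ∑ z : {z // z ∈ t}, y z * v z.1 j := by
          apply Finset.sum_congr rfl
          intro z _
          rw [dif_pos z.2]
      _ = b j := hyj j

end Helpers

theorem stmt1 (d : ℕ) (I : Finset (Fin d → ℝ))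
    (hIQ : ∀ z ∈ I, ∀ i, ∃ q : ℚ, z i = (q : ℝ))
    (β : (Fin d → ℝ) → ℝ)
    (hβpos : ∀ z ∈ I, 0 < β z) (hβsum : ∑ z ∈ I, β z = 1)
    (ζ : Fin d → ℝ) (hζ : ζ = ∑ z ∈ I, β z • z)
    (ξ : ℕ → (Fin d → ℝ)) (hξ : ∀ n, ξ n ∈ convexHull ℝ (I : Set (Fin d → ℝ)))
    (hξQ : ∀ n i, ∃ q : ℚ, ξ n i = (q : ℝ))
    (hlim : Tendsto ξ atTop (𝓝 ζ)) :
    ∃ α : ℕ → (Fin d → ℝ) → ℝ,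
      (∀ n, ∀ z ∈ I, ∃ q : ℚ, α n z = (q : ℝ)) ∧
      (∀ n, ∀ z ∈ I, 0 ≤ α n z) ∧
      (∀ n, ∑ z ∈ I, α n z = 1) ∧
      (∀ n, ξ n = ∑ z ∈ I, α n z • z) ∧
      (∀ z ∈ I, Tendsto (fun n => α n z) atTop (𝓝 (β z))) := by
  classical
  -- rational lifts of the points of I
  have hqE : ∀ z : Fin d → ℝ, ∀ i, ∃ qq : ℚ, z ∈ I → z i = (qq : ℝ) := by
    intro z i
    by_cases h : z ∈ I
    · obtain ⟨qq, hqq⟩ := hIQ z h i; exact ⟨qq, fun _ => hqq⟩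
    · exact ⟨0, fun hz => absurd hz h⟩
  choose qE hqE using hqE
  set v : (Fin d → ℝ) → Fin (d + 1) → ℚ := fun z => Fin.cons 1 (qE z) with hv
  have hv0 : ∀ z, v z 0 = 1 := fun z => rfl
  have hvs : ∀ z ∈ I, ∀ i, ((v z i.succ : ℚ) : ℝ) = z i := by
    intro z hz i
    simp only [hv, Fin.cons_succ]
    exact (hqE z i hz).symm
  -- rational lifts of the ξ n
  choose pξ hpξ using hξQ
  set bq : ℕ → Fin (d + 1) → ℚ := fun n => Fin.cons 1 (pξ n) with hbqdef
  have hbq0 : ∀ n, bq n 0 = 1 := fun n => rfl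
  have hbqs : ∀ n i, ((bq n i.succ : ℚ) : ℝ) = ξ n i := by
    intro n i
    simp only [hbqdef, Fin.cons_succ]
    exact (hpξ n i).symm
  -- rational nonnegative representations
  have hrep : ∀ n, ∃ r : (Fin d → ℝ) → ℚ, (∀ z ∈ I, 0 ≤ r z) ∧
      (∀ j, ∑ z ∈ I, r z * v z j = bq n j) :=
    fun n => rat_rep I v (fun z _ => hv0 z) hvs (ξ n) (hξ n) (bq n) (hbq0 n) (hbqs n)
  choose rq hrq0 hrqj using hrep
  -- the linear map over ℝ on the subtype index
  set ι := {z // z ∈ I}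
  set vR : ι → Fin (d + 1) → ℝ := fun z j => ((v z.1 j : ℚ) : ℝ) with hvRdef
  set TR : (ι → ℝ) →ₗ[ℝ] (Fin (d + 1) → ℝ) := Fintype.linearCombination ℝ vR with hTRdef
  have hTR_apply : ∀ (f : ι → ℝ) (j : Fin (d + 1)), TR f j = ∑ z : ι, f z * vR z j := by
    intro f j
    rw [hTRdef, Fintype.linearCombination_apply]
    simp [Finset.sum_apply, smul_eq_mul]
  have hvR0 : ∀ z : ι, vR z 0 = 1 := fun z => by
    rw [hvRdef]; show ((v z.1 0 : ℚ) : ℝ) = 1; rw [hv0]; norm_num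
  have hvRs : ∀ (z : ι) i, vR z i.succ = (z : Fin d → ℝ) i := fun z i => hvs z.1 z.2 i
  set β' : ι → ℝ := fun z => β z.1 with hβ'def
  set bz : Fin (d + 1) → ℝ := Fin.cons 1 ζ with hbzdef
  have hTRβ : TR β' = bz := by
    funext j
    rw [hTR_apply]
    induction j using Fin.cases with
    | zero =>
        simp only [hvR0, mul_one]
        rw [Finset.sum_coe_sort I β, hβsum]
        rfl
    | succ i =>
        simp only [hvRs]
        have : bz i.succ = ζ i := by rw [hbzdef, Fin.cons_succ]
        rw [this, hζ]
        rw [Finset.sum_coe_sort I (fun z => β z * z i)]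
        simp [Finset.sum_apply]
  set bnR : ℕ → Fin (d + 1) → ℝ := fun n j => ((bq n j : ℚ) : ℝ) with hbnRdef
  have hTRr : ∀ n, TR (fun z : ι => ((rq n z.1 : ℚ) : ℝ)) = bnR n := by
    intro n
    funext j
    rw [hTR_apply]
    have : ∑ z : ι, ((rq n z.1 : ℚ) : ℝ) * vR z j
        = ∑ z ∈ I, ((rq n z : ℚ) : ℝ) * ((v z j : ℚ) : ℝ) :=
      Finset.sum_coe_sort I (fun z => ((rq n z : ℚ) : ℝ) * ((v z j : ℚ) : ℝ))
    rw [this]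
    have h2 : ((∑ z ∈ I, rq n z * v z j : ℚ) : ℝ) = ((bq n j : ℚ) : ℝ) := by
      rw [hrqj n j]
    push_cast at h2
    exact h2
  have hbzmem : bz ∈ LinearMap.range TR := ⟨β', hTRβ⟩
  have hbnmem : ∀ n, bnR n ∈ LinearMap.range TR := fun n => ⟨_, hTRr n⟩
  -- a linear section of TR
  obtain ⟨S, hS⟩ := TR.rangeRestrict.exists_rightInverse_of_surjective
    (LinearMap.range_eq_top.2 TR.surjective_rangeRestrict)
  have hSapp : ∀ wv : LinearMap.range TR, TR (S wv) = (wv : Fin (d + 1) → ℝ) := by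
    intro wv
    have h1 : TR.rangeRestrict (S wv) = wv := by
      rw [← LinearMap.comp_apply, hS, LinearMap.id_apply]
    exact congrArg Subtype.val h1
  set xx : ℕ → ι → ℝ := fun n => β' + S ⟨bnR n - bz, sub_mem (hbnmem n) hbzmem⟩ with hxxdef
  have hTRx : ∀ n, TR (xx n) = bnR n := by
    intro n
    rw [hxxdef]
    simp only [map_add, hTRβ, hSapp]
    abel
  -- convergence of xx to β'
  have hbn_tendsto : Tendsto bnR atTop (𝓝 bz) := by
    rw [tendsto_pi_nhds]
    intro j
    induction j using Fin.cases with
    | zero =>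
        have h1 : ∀ n, bnR n 0 = 1 := fun n => by
          rw [hbnRdef]; show ((bq n 0 : ℚ) : ℝ) = 1; rw [hbq0]; norm_num
        have h2 : bz 0 = 1 := rfl
        rw [h2]
        exact Tendsto.congr (fun n => (h1 n).symm)
          (tendsto_const_nhds : Tendsto (fun _ : ℕ => (1:ℝ)) atTop (𝓝 1))
    | succ i =>
        have h1 : ∀ n, bnR n i.succ = ξ n i := fun n => hbqs n i
        have h2 : bz i.succ = ζ i := by rw [hbzdef, Fin.cons_succ]
        rw [h2]
        have := tendsto_pi_nhds.1 hlim i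
        exact Tendsto.congr (fun n => (h1 n).symm) this
  have hm_tendsto : Tendsto (fun n => (⟨bnR n - bz, sub_mem (hbnmem n) hbzmem⟩ :
      LinearMap.range TR)) atTop (𝓝 (0 : LinearMap.range TR)) := by
    rw [tendsto_subtype_rng]
    simpa using hbn_tendsto.sub (tendsto_const_nhds (x := bz))
  have hxx_tendsto : Tendsto xx atTop (𝓝 β') := by
    have hScont : Continuous S := S.continuous_of_finiteDimensional
    have h1 : Tendsto (fun n => S ⟨bnR n - bz, sub_mem (hbnmem n) hbzmem⟩) atTop
        (𝓝 (S 0)) := (hScont.tendsto 0).comp hm_tendsto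
    rw [map_zero] at h1
    have := (tendsto_const_nhds (x := β') (f := atTop (α := ℕ))).add h1
    simpa using this
  -- kernel approximation to get rational solutions close to xx
  have hker : ∀ n, ∃ k : ι → ℚ, (∀ j, ∑ z : ι, k z * v z.1 j = 0) ∧
      ∀ z : ι, |(xx n z - ((rq n z.1 : ℚ) : ℝ)) - ((k z : ℚ) : ℝ)| < 1 / (n + 1 : ℝ) := by
    intro n
    have hpos : (0 : ℝ) < 1 / (n + 1 : ℝ) := by positivity
    apply kernel_approx (fun z : ι => v z.1) (fun z => xx n z - ((rq n z.1 : ℚ) : ℝ)) _ hpos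
    intro j
    have h1 := congrFun (hTRx n) j
    rw [hTR_apply] at h1
    have h2 := congrFun (hTRr n) j
    rw [hTR_apply] at h2
    calc ∑ z : ι, (xx n z - ((rq n z.1 : ℚ) : ℝ)) * ((v z.1 j : ℚ) : ℝ)
        = ∑ z : ι, (xx n z * vR z j - ((rq n z.1 : ℚ) : ℝ) * vR z j) := by
          apply Finset.sum_congr rfl; intro z _; rw [sub_mul]
      _ = ∑ z : ι, xx n z * vR z j - ∑ z : ι, ((rq n z.1 : ℚ) : ℝ) * vR z j :=
          Finset.sum_sub_distrib _ _
      _ = 0 := by rw [h1, h2, sub_self]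
  choose kq hkq0 hkq1 using hker
  set y : ℕ → ι → ℚ := fun n z => rq n z.1 + kq n z with hydef
  have hrqj' : ∀ n j, ∑ z : ι, rq n z.1 * v z.1 j = bq n j := by
    intro n j
    rw [Finset.sum_coe_sort I (fun z => rq n z * v z j)]
    exact hrqj n j
  have hyj : ∀ n j, ∑ z : ι, y n z * v z.1 j = bq n j := by
    intro n j
    rw [hydef]
    simp only [add_mul, Finset.sum_add_distrib]
    rw [hrqj' n j, hkq0 n j, add_zero]
  have hyx : ∀ n (z : ι), |xx n z - ((y n z : ℚ) : ℝ)| < 1 / (n + 1 : ℝ) := by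
    intro n z
    have := hkq1 n z
    rw [hydef]
    push_cast
    convert this using 2
    ring
  have hytends : ∀ z : ι, Tendsto (fun n => ((y n z : ℚ) : ℝ)) atTop (𝓝 (β z.1)) := by
    intro z
    have h1 : Tendsto (fun n => xx n z) atTop (𝓝 (β z.1)) := by
      have := tendsto_pi_nhds.1 hxx_tendsto z
      exact this
    have h2 : Tendsto (fun n => ((y n z : ℚ) : ℝ) - xx n z) atTop (𝓝 0) := by
      have hb : ∀ n : ℕ, ‖((y n z : ℚ) : ℝ) - xx n z‖ ≤ 1 / (n + 1 : ℝ) := fun n => by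
        rw [Real.norm_eq_abs, abs_sub_comm]
        exact (hyx n z).le
      exact squeeze_zero_norm hb tendsto_one_div_add_atTop_nhds_zero_nat
    have := h1.add h2
    simpa using this
  -- eventual nonnegativity
  have hev : ∀ᶠ n in atTop, ∀ z : ι, 0 ≤ y n z := by
    rw [eventually_all]
    intro z
    have hpos := hβpos z.1 z.2
    have h1 := (hytends z).eventually (eventually_gt_nhds hpos)
    filter_upwards [h1] with n hn
    exact_mod_cast hn.le
  -- the final coefficients
  set A : ℕ → ι → ℚ := fun n => if ∀ z : ι, 0 ≤ y n z then y n else fun z => rq n z.1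
    with hAdef
  have hA0 : ∀ n (z : ι), 0 ≤ A n z := by
    intro n z
    simp only [hAdef]
    by_cases h : ∀ z : ι, 0 ≤ y n z
    · rw [if_pos h]; exact h z
    · rw [if_neg h]; exact hrq0 n z.1 z.2
  have hAj : ∀ n j, ∑ z : ι, A n z * v z.1 j = bq n j := by
    intro n j
    simp only [hAdef]
    by_cases h : ∀ z : ι, 0 ≤ y n z
    · rw [if_pos h]; exact hyj n j
    · rw [if_neg h]; exact hrqj' n j
  have hAev : ∀ᶠ n in atTop, A n = y n := by
    filter_upwards [hev] with n hn
    simp only [hAdef]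
    rw [if_pos hn]
  refine ⟨fun n z => if h : z ∈ I then ((A n ⟨z, h⟩ : ℚ) : ℝ) else 0, ?_, ?_, ?_, ?_, ?_⟩
  · intro n z hz
    exact ⟨A n ⟨z, hz⟩, by simp only [dif_pos hz]⟩
  · intro n z hz
    simp only [dif_pos hz]
    exact_mod_cast hA0 n ⟨z, hz⟩
  · intro n
    have h1 : ∑ z ∈ I, (if h : z ∈ I then ((A n ⟨z, h⟩ : ℚ) : ℝ) else 0)
        = ∑ z : ι, ((A n z : ℚ) : ℝ) := by
      rw [← Finset.sum_coe_sort I (fun z => if h : z ∈ I then ((A n ⟨z, h⟩ : ℚ) : ℝ) else 0)]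
      apply Finset.sum_congr rfl
      intro z _
      rw [dif_pos z.2]
    rw [h1]
    have h2 := hAj n 0
    have h3 : ∑ z : ι, A n z = 1 := by
      have : ∀ z : ι, A n z * v z.1 0 = A n z := fun z => by rw [hv0, mul_one]
      rw [← Finset.sum_congr rfl (fun z _ => this z), h2, hbq0]
    calc ∑ z : ι, ((A n z : ℚ) : ℝ) = ((∑ z : ι, A n z : ℚ) : ℝ) := by push_cast; rfl
      _ = 1 := by rw [h3]; norm_num
  · intro n
    funext i
    have h1 : (∑ z ∈ I, (if h : z ∈ I then ((A n ⟨z, h⟩ : ℚ) : ℝ) else 0) • z) i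
        = ∑ z : ι, ((A n z : ℚ) : ℝ) * (z : Fin d → ℝ) i := by
      rw [Finset.sum_apply]
      rw [← Finset.sum_coe_sort I
        (fun z => ((if h : z ∈ I then ((A n ⟨z, h⟩ : ℚ) : ℝ) else 0) • z) i)]
      apply Finset.sum_congr rfl
      intro z _
      rw [Pi.smul_apply, smul_eq_mul, dif_pos z.2]
    rw [h1]
    have h2 : ∑ z : ι, ((A n z : ℚ) : ℝ) * (z : Fin d → ℝ) i
        = ((∑ z : ι, A n z * v z.1 i.succ : ℚ) : ℝ) := by
      push_cast
      apply Finset.sum_congr rfl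
      intro z _
      rw [hvs z.1 z.2 i]
    rw [h2, hAj n i.succ, hbqs n i]
  · intro z hz
    have h1 := hytends ⟨z, hz⟩
    apply h1.congr'
    filter_upwards [hAev] with n hn
    rw [dif_pos hz, hn]
end

section
/- Let R ⊂ ℤ^d be a finite set, U its convex hull, and U₀ a face of U with 0 ∉ U₀. Set R₀ = R ∩ U₀. Then any admissible path x₀ = 0, x₁, ..., x_n with steps x_k − x_{k−1} ∈ R and endpoint x_n ∈ n·U₀ uses only steps from R₀ and visits no lattice point twice (all x₀,...,x_n are distinct). -/
open Set Pointwise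

lemma centroid_extreme {E : Type*} [AddCommGroup E] [Module ℝ E]
    {A B : Set E} (hA : Convex ℝ A) (hB : IsExtreme ℝ A B) :
    ∀ (m : ℕ) (z : ℕ → E), 0 < m → (∀ k < m, z k ∈ A) →
      ((m : ℝ)⁻¹ • ∑ k ∈ Finset.range m, z k) ∈ B → ∀ k < m, z k ∈ B := by
  intro m
  induction m with
  | zero => intro z h; omega
  | succ m ih =>
    intro z _ hzA hc k hk
    rcases Nat.eq_zero_or_pos m with rfl | hm
    · interval_cases k
      simpa using hc
    · -- write the centroid as a convex combination of p and z m
      set p : E := (m : ℝ)⁻¹ • ∑ k ∈ Finset.range m, z k with hp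
      have hpA : p ∈ A := by
        rw [hp, Finset.smul_sum]
        refine hA.sum_mem (fun i _ => by positivity) ?_ (fun i hi => hzA i (by
          simp only [Finset.mem_range] at hi; omega))
        simp [Finset.sum_const, mul_inv_cancel₀ (by positivity : (m:ℝ) ≠ 0)]
      have hzmA : z m ∈ A := hzA m (by omega)
      have hmem : ((m+1 : ℝ)⁻¹ • ∑ k ∈ Finset.range (m+1), z k)
          ∈ openSegment ℝ p (z m) := by
        refine ⟨(m : ℝ) / (m+1), 1 / (m+1), by positivity, by positivity, ?_, ?_⟩
        · field_simp
        · rw [hp, Finset.sum_range_succ, smul_add, smul_smul]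
          have h1 : (m : ℝ) / (m+1) * (m : ℝ)⁻¹ = (m+1 : ℝ)⁻¹ := by
            field_simp
          rw [h1]
          congr 1
          · simp
      have hc' : ((m+1 : ℝ)⁻¹ • ∑ k ∈ Finset.range (m+1), z k) ∈ B := by
        simpa using hc
      obtain ⟨hpB, hzmB⟩ := And.intro (hB.2 hpA hzmA hc' hmem) (hB.right_mem_of_mem_openSegment hpA hzmA hc' hmem)
      rcases Nat.lt_succ_iff_lt_or_eq.mp hk with h | rfl
      · exact ih z hm (fun i hi => hzA i (by omega)) hpB k h
      · exact hzmB

theorem stmt3 (d n : ℕ) (R : Finset (Fin d → ℝ))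
    (hRZ : ∀ z ∈ R, ∀ i, ∃ m : ℤ, z i = (m : ℝ))
    (U₀ : Set (Fin d → ℝ)) (hconv : Convex ℝ U₀)
    (hface : IsExtreme ℝ (convexHull ℝ (R : Set (Fin d → ℝ))) U₀)
    (h0 : (0 : Fin d → ℝ) ∉ U₀)
    (x : ℕ → Fin d → ℝ) (hx0 : x 0 = 0)
    (hstep : ∀ k < n, x (k+1) - x k ∈ R)
    (hend : x n ∈ (n : ℝ) • U₀) :
    (∀ k < n, x (k+1) - x k ∈ (R : Set (Fin d → ℝ)) ∩ U₀) ∧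
    (∀ i ≤ n, ∀ j ≤ n, x i = x j → i = j) := by
  rcases Nat.eq_zero_or_pos n with rfl | hn
  · exact ⟨fun k hk => absurd hk (by omega), fun i hi j hj _ => by omega⟩
  set z : ℕ → (Fin d → ℝ) := fun k => x (k+1) - x k with hz
  have hsum : ∀ i j, i ≤ j → ∑ k ∈ Finset.Ico i j, z k = x j - x i := by
    intro i j hij
    rw [hz, Finset.sum_Ico_eq_sub (fun k => x (k+1) - x k) hij,
      Finset.sum_range_sub (fun k => x k), Finset.sum_range_sub (fun k => x k)]
    abel
  have hxn : ∑ k ∈ Finset.range n, z k = x n := by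
    have := hsum 0 n (by omega)
    simpa [hx0] using this
  obtain ⟨u, huU, huu⟩ := hend
  have hcent : ((n : ℝ)⁻¹ • ∑ k ∈ Finset.range n, z k) ∈ U₀ := by
    rw [hxn, ← huu, smul_smul, inv_mul_cancel₀ (by positivity : (n:ℝ) ≠ 0), one_smul]
    exact huU
  have hzU : ∀ k < n, z k ∈ U₀ := by
    refine centroid_extreme (convex_convexHull ℝ _) hface n z hn
      (fun k hk => subset_convexHull ℝ _ (hstep k hk)) hcent
  constructor
  · exact fun k hk => ⟨hstep k hk, hzU k hk⟩
  · intro i hi j hj hij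
    by_contra hne
    -- wlog i < j
    wlog hlt : i < j generalizing i j
    · exact this j hj i hi hij.symm (Ne.symm hne) (by omega)
    have hzero : ∑ k ∈ Finset.Ico i j, z k = 0 := by
      rw [hsum i j (le_of_lt hlt), hij, sub_self]
    have h0' : (0 : Fin d → ℝ) ∈ U₀ := by
      have card : (Finset.Ico i j).card = j - i := Nat.card_Ico i j
      have hpos : (0:ℝ) < ((j - i : ℕ) : ℝ) := by
        have : 0 < j - i := by omega
        exact_mod_cast this
      have := hconv.sum_mem (t := Finset.Ico i j)
        (w := fun _ => ((j - i : ℕ) : ℝ)⁻¹) (fun k _ => by positivity)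
        (by simp [card, mul_inv_cancel₀ (ne_of_gt hpos)])
        (fun k hk => hzU k (by simp only [Finset.mem_Ico] at hk; omega))
      rw [← Finset.smul_sum, hzero, smul_zero] at this
      exact this
    exact h0 h0'
end
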